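/- Let ν be a probability measure on [0,∞) with finite α-moment m = ∫_{[0,∞)} x^α ν(dx) < ∞, and let G and H be its Williamson transform and truncated α-moment. Then for all real 0 ≤ s ≤ t, every z > 0 and every ε ∈ {0,1}: (a) lim_{n→∞} ( ⌊nt⌋ − ⌊ns⌋ ) · (n^{1/α} z)^{−α} H( n^{1/α} z ) = m (t − s) z^{−α}, and (b) lim_{n→∞} G( n^{1/α} z )^{⌊nt⌋ − ⌊ns⌋ − ε} = exp( −m (t − s) z^{−α} ). -/

import Mathlib

open MeasureTheory Filter Real Topology

private lemma aux_floor_div (s t : ℝ) :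
    Tendsto (fun n : ℕ => ((⌊(n : ℝ) * t⌋ - ⌊(n : ℝ) * s⌋ : ℤ) : ℝ) / n) atTop (𝓝 (t - s)) := by
  have h0 : Tendsto (fun n : ℕ =>
      ((⌊(n : ℝ) * t⌋ - ⌊(n : ℝ) * s⌋ : ℤ) : ℝ) / n - (t - s)) atTop (𝓝 0) := by
    refine squeeze_zero_norm' (a := fun n : ℕ => 2 / n) ?_ (tendsto_const_div_atTop_nhds_zero_nat 2)
    · filter_upwards [eventually_ge_atTop 1] with n hn
      have hn0 : (0:ℝ) < n := by exact_mod_cast hn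
      have h1l := Int.floor_le ((n:ℝ)*t)
      have h1u := Int.lt_floor_add_one ((n:ℝ)*t)
      have h2l := Int.floor_le ((n:ℝ)*s)
      have h2u := Int.lt_floor_add_one ((n:ℝ)*s)
      have key : ((⌊(n : ℝ) * t⌋ - ⌊(n : ℝ) * s⌋ : ℤ) : ℝ) / n - (t - s)
          = ((((⌊(n : ℝ) * t⌋ : ℝ) - (n:ℝ)*t) - ((⌊(n : ℝ) * s⌋ : ℝ) - (n:ℝ)*s))) / n := by
        push_cast
        field_simp
        ring
      rw [Real.norm_eq_abs, key, abs_div, abs_of_pos hn0]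
      have habs : |(((⌊(n : ℝ) * t⌋ : ℝ) - (n:ℝ)*t) - ((⌊(n : ℝ) * s⌋ : ℝ) - (n:ℝ)*s))| ≤ 2 := by
        rw [abs_le]; constructor <;> nlinarith
      gcongr
  have := h0.add (tendsto_const_nhds (x := t - s))
  simpa using this

theorem kendall_fdd_limits_finite_moment
    (α : ℝ) (hα : 0 < α)
    (ν : Measure ℝ) [IsProbabilityMeasure ν] (hν : ν (Set.Iio 0) = 0)
    (F G H : ℝ → ℝ)
    (hF : ∀ t, F t = (ν (Set.Iic t)).toReal)
    (hG : ∀ t, 0 < t → G t = ∫ x, max (1 - (x / t) ^ α) 0 ∂ν)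
    (hH : ∀ t, 0 < t → H t = ∫ x in Set.Icc 0 t, x ^ α ∂ν)
    (hmo : Integrable (fun x => x ^ α) ν)
    (s t : ℝ) (hs : 0 ≤ s) (hst : s ≤ t) (z : ℝ) (hz : 0 < z)
    (ε : ℤ) (hε : ε = 0 ∨ ε = 1) :
    Tendsto (fun n : ℕ =>
        ((⌊(n : ℝ) * t⌋ - ⌊(n : ℝ) * s⌋ : ℤ) : ℝ) *
          ((n : ℝ) ^ (α⁻¹) * z) ^ (-α) * H ((n : ℝ) ^ (α⁻¹) * z)) atTop
      (𝓝 ((∫ x, x ^ α ∂ν) * (t - s) * z ^ (-α))) ∧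
    Tendsto (fun n : ℕ =>
        G ((n : ℝ) ^ (α⁻¹) * z) ^ (⌊(n : ℝ) * t⌋ - ⌊(n : ℝ) * s⌋ - ε)) atTop
      (𝓝 (Real.exp (-(∫ x, x ^ α ∂ν) * (t - s) * z ^ (-α)))) := by
  have hαinv : 0 < α⁻¹ := inv_pos.mpr hα
  set m : ℝ := ∫ x, x ^ α ∂ν with hm
  -- positivity of the scaling sequence
  have hrpos : ∀ n : ℕ, 1 ≤ n → 0 < (n : ℝ) ^ (α⁻¹) * z := by
    intro n hn
    have : (0:ℝ) < (n:ℝ) := by exact_mod_cast hn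
    exact mul_pos (Real.rpow_pos_of_pos this _) hz
  have hrpow : ∀ n : ℕ, ((n : ℝ) ^ (α⁻¹) * z) ^ α = (n : ℝ) * z ^ α := by
    intro n
    rw [Real.mul_rpow (Real.rpow_nonneg (Nat.cast_nonneg n) _) hz.le,
      ← Real.rpow_mul (Nat.cast_nonneg n), inv_mul_cancel₀ hα.ne', Real.rpow_one]
  have hrmono : Monotone (fun n : ℕ => (n : ℝ) ^ (α⁻¹) * z) := by
    intro a b hab
    exact mul_le_mul_of_nonneg_right
      (Real.rpow_le_rpow (Nat.cast_nonneg _) (Nat.cast_le.mpr hab) hαinv.le) hz.le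
  have hrtop : Tendsto (fun n : ℕ => (n : ℝ) ^ (α⁻¹) * z) atTop atTop :=
    Tendsto.atTop_mul_const hz ((tendsto_rpow_atTop hαinv).comp tendsto_natCast_atTop_atTop)
  have hae : ∀ᵐ x ∂ν, 0 ≤ x := by
    rw [ae_iff]
    have : {x : ℝ | ¬ 0 ≤ x} = Set.Iio 0 := by ext x; simp [not_le]
    rw [this]; exact hν
  have hres : ν.restrict (Set.Ici 0) = ν :=
    Measure.restrict_eq_self_of_ae_mem (by filter_upwards [hae] with x hx; exact hx)
  have hUnion : (⋃ n : ℕ, Set.Icc 0 ((n : ℝ) ^ (α⁻¹) * z)) = Set.Ici 0 := by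
    apply Set.Subset.antisymm
    · exact Set.iUnion_subset fun n x hx => hx.1
    · intro x hx
      obtain ⟨n, hn⟩ := (hrtop.eventually (eventually_ge_atTop x)).exists
      exact Set.mem_iUnion.mpr ⟨n, hx, hn⟩
  have hIci : (∫ x in Set.Ici 0, x ^ α ∂ν) = m := by
    rw [hm]; conv_rhs => rw [← hres]
  have Jtend : Tendsto (fun n : ℕ => ∫ x in Set.Icc 0 ((n : ℝ) ^ (α⁻¹) * z), x ^ α ∂ν)
      atTop (𝓝 m) := by
    have h := tendsto_setIntegral_of_monotone (μ := ν) (f := fun x => x ^ α)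
      (s := fun n : ℕ => Set.Icc 0 ((n : ℝ) ^ (α⁻¹) * z))
      (fun n => measurableSet_Icc)
      (fun a b hab => Set.Icc_subset_Icc le_rfl (hrmono hab))
      hmo.integrableOn
    rwa [hUnion, hIci] at h
  have hz_neg : z ^ (-α) = (z ^ α)⁻¹ := Real.rpow_neg hz.le α
  have hzα : (0:ℝ) < z ^ α := Real.rpow_pos_of_pos hz α
  have hrneg : ∀ n : ℕ, 1 ≤ n → ((n : ℝ) ^ (α⁻¹) * z) ^ (-α) = (n:ℝ)⁻¹ * z ^ (-α) := by
    intro n hn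
    rw [Real.rpow_neg (hrpos n hn).le, hrpow n, mul_inv, hz_neg]
  -- part (a)
  have partA : Tendsto (fun n : ℕ =>
      ((⌊(n : ℝ) * t⌋ - ⌊(n : ℝ) * s⌋ : ℤ) : ℝ) *
        ((n : ℝ) ^ (α⁻¹) * z) ^ (-α) * H ((n : ℝ) ^ (α⁻¹) * z)) atTop
      (𝓝 (m * (t - s) * z ^ (-α))) := by
    have hlim : Tendsto (fun n : ℕ =>
        (((⌊(n : ℝ) * t⌋ - ⌊(n : ℝ) * s⌋ : ℤ) : ℝ) / n * z ^ (-α)) *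
          ∫ x in Set.Icc 0 ((n : ℝ) ^ (α⁻¹) * z), x ^ α ∂ν) atTop
        (𝓝 ((t - s) * z ^ (-α) * m)) :=
      ((aux_floor_div s t).mul_const _).mul Jtend
    rw [show m * (t - s) * z ^ (-α) = (t - s) * z ^ (-α) * m by ring]
    refine Tendsto.congr' ?_ hlim
    filter_upwards [eventually_ge_atTop 1] with n hn
    rw [hH _ (hrpos n hn), hrneg n hn]
    have hn0 : (n:ℝ) ≠ 0 := by positivity
    field_simp
  refine ⟨partA, ?_⟩
  -- part (b)
  set c : ℝ := m * z ^ (-α) with hc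
  -- key identity
  have hkey : ∀ n : ℕ, 1 ≤ n → (n : ℝ) * (1 - G ((n : ℝ) ^ (α⁻¹) * z))
      = ∫ x, min ((max x 0) ^ α * z ^ (-α)) (n:ℝ) ∂ν := by
    intro n hn
    set u : ℝ := (n : ℝ) ^ (α⁻¹) * z with hu
    have hu0 : 0 < u := hrpos n hn
    have hn0 : (0:ℝ) < (n:ℝ) := by exact_mod_cast hn
    have hψcont : Continuous (fun x : ℝ => min ((max x 0 / u) ^ α) 1) := by
      apply Continuous.min _ continuous_const
      apply Continuous.rpow_const ((continuous_id.max continuous_const).div_const u)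
      intro x; exact Or.inr hα.le
    have hψint : Integrable (fun x : ℝ => min ((max x 0 / u) ^ α) 1) ν := by
      refine (integrable_const (1:ℝ)).mono' hψcont.aestronglyMeasurable ?_
      refine Eventually.of_forall fun x => ?_
      have h0 : 0 ≤ (max x 0 / u) ^ α :=
        Real.rpow_nonneg (div_nonneg (le_max_right x 0) hu0.le) _
      rw [Real.norm_eq_abs, abs_of_nonneg (le_min h0 zero_le_one)]
      exact min_le_right _ _
    have hGeq : G u = 1 - ∫ x, min ((max x 0 / u) ^ α) 1 ∂ν := by
      rw [hG u hu0]
      have : ∫ x, max (1 - (x / u) ^ α) 0 ∂ν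
          = ∫ x, (1 - min ((max x 0 / u) ^ α) 1) ∂ν := by
        refine integral_congr_ae ?_
        filter_upwards [hae] with x hx
        rw [max_eq_left hx]
        have h0 : 0 ≤ (x / u) ^ α := Real.rpow_nonneg (div_nonneg hx hu0.le) _
        rcases le_total ((x / u) ^ α) 1 with h | h
        · rw [min_eq_left h, max_eq_left (by linarith)]
        · rw [min_eq_right h, max_eq_right (by linarith)]; ring
      rw [this, integral_sub (integrable_const 1) hψint, integral_const]
      simp
    rw [hGeq]
    have : (n:ℝ) * (1 - (1 - ∫ x, min ((max x 0 / u) ^ α) 1 ∂ν))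
        = ∫ x, (n:ℝ) * min ((max x 0 / u) ^ α) 1 ∂ν := by
      rw [integral_const_mul]; ring
    rw [this]
    refine integral_congr_ae (Eventually.of_forall fun x => ?_)
    have hx0 : (0:ℝ) ≤ max x 0 := le_max_right x 0
    dsimp only
    rw [mul_min_of_nonneg _ _ hn0.le, mul_one,
      Real.div_rpow hx0 hu0.le, hrpow n]
    congr 1
    rw [hz_neg]
    field_simp
  -- dominated convergence
  have htendU : Tendsto (fun n : ℕ => ∫ x, min ((max x 0) ^ α * z ^ (-α)) (n:ℝ) ∂ν)
      atTop (𝓝 c) := by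
    have hb_nonneg : ∀ x : ℝ, 0 ≤ (max x 0) ^ α * z ^ (-α) := fun x =>
      mul_nonneg (Real.rpow_nonneg (le_max_right x 0) _) (Real.rpow_nonneg hz.le _)
    have hbcont : Continuous (fun x : ℝ => (max x 0) ^ α * z ^ (-α)) := by
      apply Continuous.mul _ continuous_const
      apply Continuous.rpow_const (continuous_id.max continuous_const)
      intro x; exact Or.inr hα.le
    have hbint : Integrable (fun x : ℝ => (max x 0) ^ α * z ^ (-α)) ν := by
      refine (hmo.mul_const (z ^ (-α))).congr ?_
      filter_upwards [hae] with x hx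
      rw [max_eq_left hx]
    have hcval : (∫ x, (max x 0) ^ α * z ^ (-α) ∂ν) = c := by
      rw [hc, hm, ← integral_mul_const]
      refine integral_congr_ae ?_
      filter_upwards [hae] with x hx
      rw [max_eq_left hx]
    rw [← hcval]
    refine tendsto_integral_of_dominated_convergence
      (fun x => (max x 0) ^ α * z ^ (-α)) ?_ hbint ?_ ?_
    · intro n
      exact ((hbcont.min continuous_const)).aestronglyMeasurable
    · intro n
      refine Eventually.of_forall fun x => ?_
      rw [Real.norm_eq_abs, abs_of_nonneg (le_min (hb_nonneg x) (Nat.cast_nonneg n))]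
      exact min_le_left _ _
    · refine Eventually.of_forall fun x => ?_
      have hev : ∀ᶠ n : ℕ in atTop,
          ((max x 0) ^ α * z ^ (-α) : ℝ) = min ((max x 0) ^ α * z ^ (-α)) (n:ℝ) := by
        filter_upwards [eventually_ge_atTop ⌈(max x 0) ^ α * z ^ (-α)⌉₊] with k hk
        exact (min_eq_left ((Nat.le_ceil _).trans (by exact_mod_cast hk))).symm
      exact tendsto_const_nhds.congr' hev
  have nUtend : Tendsto (fun n : ℕ => (n : ℝ) * (1 - G ((n : ℝ) ^ (α⁻¹) * z)))
      atTop (𝓝 c) := by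
    refine Tendsto.congr' ?_ htendU
    filter_upwards [eventually_ge_atTop 1] with n hn
    exact (hkey n hn).symm
  have utend : Tendsto (fun n : ℕ => 1 - G ((n : ℝ) ^ (α⁻¹) * z)) atTop (𝓝 0) := by
    have h := (tendsto_inv_atTop_nhds_zero_nat : Tendsto (fun n : ℕ => ((n : ℝ))⁻¹) atTop (𝓝 0)).mul nUtend
    rw [zero_mul] at h
    refine Tendsto.congr' ?_ h
    filter_upwards [eventually_ge_atTop 1] with n hn
    have hn0 : (n:ℝ) ≠ 0 := by positivity
    field_simp
  have Gtend : Tendsto (fun n : ℕ => G ((n : ℝ) ^ (α⁻¹) * z)) atTop (𝓝 1) := by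
    have h := (tendsto_const_nhds (x := (1:ℝ)) (f := atTop (α := ℕ))).sub utend
    simpa using h
  have hGhalf : ∀ᶠ n : ℕ in atTop, (1:ℝ)/2 ≤ G ((n : ℝ) ^ (α⁻¹) * z) :=
    Gtend.eventually (eventually_ge_nhds (by norm_num : (1:ℝ)/2 < 1))
  -- n * log G → -c
  have Ltend : Tendsto (fun n : ℕ => (n : ℝ) * Real.log (G ((n : ℝ) ^ (α⁻¹) * z)))
      atTop (𝓝 (-c)) := by
    have hlower : Tendsto (fun n : ℕ =>
        -((n : ℝ) * (1 - G ((n : ℝ) ^ (α⁻¹) * z))) / G ((n : ℝ) ^ (α⁻¹) * z))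
        atTop (𝓝 (-c)) := by
      have h := nUtend.neg.div Gtend one_ne_zero
      rw [div_one] at h
      exact h
    have hupper : Tendsto (fun n : ℕ => -((n : ℝ) * (1 - G ((n : ℝ) ^ (α⁻¹) * z))))
        atTop (𝓝 (-c)) := nUtend.neg
    refine tendsto_of_tendsto_of_tendsto_of_le_of_le' hlower hupper ?_ ?_
    · filter_upwards [hGhalf] with n hGn
      set g := G ((n : ℝ) ^ (α⁻¹) * z)
      have hg0 : 0 < g := by linarith
      have h1 : Real.log g⁻¹ ≤ g⁻¹ - 1 := Real.log_le_sub_one_of_pos (inv_pos.mpr hg0)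
      rw [Real.log_inv] at h1
      have h2 : 1 - g⁻¹ ≤ Real.log g := by linarith
      have h3 : -((n:ℝ) * (1 - g)) / g = (n:ℝ) * (1 - g⁻¹) := by
        field_simp
        ring
      rw [h3]
      exact mul_le_mul_of_nonneg_left h2 (Nat.cast_nonneg n)
    · filter_upwards [hGhalf] with n hGn
      set g := G ((n : ℝ) ^ (α⁻¹) * z)
      have hg0 : 0 < g := by linarith
      have h1 : Real.log g ≤ g - 1 := Real.log_le_sub_one_of_pos hg0
      have := mul_le_mul_of_nonneg_left h1 (Nat.cast_nonneg (α := ℝ) n)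
      linarith
  -- exponent limit
  have fdiv : Tendsto (fun n : ℕ => ((⌊(n : ℝ) * t⌋ - ⌊(n : ℝ) * s⌋ - ε : ℤ) : ℝ) / n)
      atTop (𝓝 (t - s)) := by
    have h := (aux_floor_div s t).sub (tendsto_const_div_atTop_nhds_zero_nat (ε : ℝ))
    rw [sub_zero] at h
    refine Tendsto.congr ?_ h
    intro n
    push_cast
    ring
  have Etend : Tendsto (fun n : ℕ =>
      ((⌊(n : ℝ) * t⌋ - ⌊(n : ℝ) * s⌋ - ε : ℤ) : ℝ) *
        Real.log (G ((n : ℝ) ^ (α⁻¹) * z))) atTop (𝓝 ((t - s) * -c)) := by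
    have h := fdiv.mul Ltend
    refine Tendsto.congr' ?_ h
    filter_upwards [eventually_ge_atTop 1] with n hn
    have hn0 : (n:ℝ) ≠ 0 := by positivity
    field_simp
  have final := (Real.continuous_exp.tendsto _).comp Etend
  rw [show -m * (t - s) * z ^ (-α) = (t - s) * -c by rw [hc]; ring]
  refine Tendsto.congr' ?_ final
  filter_upwards [hGhalf] with n hGn
  have hg0 : 0 < G ((n : ℝ) ^ (α⁻¹) * z) := by linarith
  simp only [Function.comp_apply]
  rw [← Real.rpow_intCast (G ((n : ℝ) ^ (α⁻¹) * z)) (⌊(n : ℝ) * t⌋ - ⌊(n : ℝ) * s⌋ - ε),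
    Real.rpow_def_of_pos hg0, mul_comm]
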